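/- Let λ₁ ≥ … ≥ λ_m ≥ 0 be a nonincreasing nonnegative sequence, let I = {I_1,…,I_m} be a partition of {1,…,p}, let X ∈ ℝ^{n×p} be any matrix, and let W = diag(w₁,…,w_m) with all w_i > 0. Then the function b ↦ J_λ(W ⟦b⟧_{X,I}) is a seminorm on ℝ^p: it is absolutely homogeneous and satisfies the triangle inequality. -/
import Mathlib

/-- The nonincreasing rearrangement of the absolute values of the coordinates of `b`. -/
noncomputable def sortedAbs {p : ℕ} (b : Fin p → ℝ) : Fin p → ℝ :=
  fun i => |b (Tuple.sort (fun j => |b j|) (Fin.rev i))|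

/-- The sorted ℓ₁ norm `J_λ(b) = Σ_i λ_i |b|_{(i)}`. -/
noncomputable def Jlam {p : ℕ} (lam b : Fin p → ℝ) : ℝ :=
  ∑ i, lam i * sortedAbs b i

open Finset in
/-- Given a partition of the coordinates `{1,…,p}` into groups (encoded by `grp`) and a
design matrix `X ∈ ℝ^{n×p}`, `groupEffect X grp b i = ‖X_{I_i} b_{I_i}‖₂` is the Euclidean
norm of the `i`-th group effect. -/
noncomputable def groupEffect {n p m : ℕ} (X : Matrix (Fin n) (Fin p) ℝ)
    (grp : Fin p → Fin m) (b : Fin p → ℝ) (i : Fin m) : ℝ :=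
  Real.sqrt (∑ k, (∑ j ∈ univ.filter (fun j => grp j = i), X k j * b j) ^ 2)

/-- The sorting permutation: `sortPerm b i = Tuple.sort (|b|) (Fin.rev i)`. -/
noncomputable def sortPerm {p : ℕ} (b : Fin p → ℝ) : Equiv.Perm (Fin p) :=
  (Fin.revPerm).trans (Tuple.sort (fun j => |b j|))

lemma sortedAbs_eq {p : ℕ} (b : Fin p → ℝ) (i : Fin p) :
    sortedAbs b i = |b (sortPerm b i)| := rfl

lemma sortedAbs_antitone {p : ℕ} (b : Fin p → ℝ) : Antitone (sortedAbs b) := by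
  intro i j hij
  have h := Tuple.monotone_sort (fun j => |b j|) (Fin.rev_le_rev.2 hij)
  simpa [sortedAbs, Function.comp] using h

lemma jlam_eq_perm {p : ℕ} (lam b : Fin p → ℝ) :
    Jlam lam b = ∑ j, lam ((sortPerm b)⁻¹ j) * |b j| := by
  rw [← Equiv.sum_comp (sortPerm b) (fun j => lam ((sortPerm b)⁻¹ j) * |b j|)]
  simp [Jlam, sortedAbs_eq]

/-- Key rearrangement lemma: `Jlam` dominates any permuted pairing. -/
lemma sum_perm_le_jlam {p : ℕ} (lam : Fin p → ℝ)
    (hlam : Antitone lam) (b : Fin p → ℝ) (σ : Equiv.Perm (Fin p)) :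
    ∑ j, lam (σ j) * |b j| ≤ Jlam lam b := by
  have h1 : ∑ j, lam (σ j) * |b j|
      = ∑ i, sortedAbs b i * lam (((sortPerm b).trans σ) i) := by
    rw [← Equiv.sum_comp (sortPerm b) (fun j => lam (σ j) * |b j|)]
    simp [sortedAbs_eq, mul_comm, Equiv.trans_apply]
  rw [h1]
  have hmono : Monovary (sortedAbs b) lam :=
    (sortedAbs_antitone b).monovary hlam
  calc ∑ i, sortedAbs b i * lam (((sortPerm b).trans σ) i)
      ≤ ∑ i, sortedAbs b i * lam i :=
        hmono.sum_mul_comp_perm_le_sum_mul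
    _ = Jlam lam b := by simp [Jlam, mul_comm]

/-- Scaling: `Jlam lam (c • v) = c * Jlam lam v` for `c ≥ 0`. -/
lemma jlam_smul {p : ℕ} (lam : Fin p → ℝ) (hlam : Antitone lam)
    (c : ℝ) (hc : 0 ≤ c) (v : Fin p → ℝ) :
    Jlam lam (fun i => c * v i) = c * Jlam lam v := by
  apply le_antisymm
  · rw [jlam_eq_perm lam (fun i => c * v i)]
    calc ∑ j, lam ((sortPerm (fun i => c * v i))⁻¹ j) * |c * v j|
        = c * ∑ j, lam ((sortPerm (fun i => c * v i))⁻¹ j) * |v j| := by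
          rw [Finset.mul_sum]; congr 1; ext j
          rw [abs_mul, abs_of_nonneg hc]; ring
      _ ≤ c * Jlam lam v := by
          apply mul_le_mul_of_nonneg_left _ hc
          exact sum_perm_le_jlam lam hlam v _
  · rw [jlam_eq_perm lam v]
    calc c * ∑ j, lam ((sortPerm v)⁻¹ j) * |v j|
        = ∑ j, lam ((sortPerm v)⁻¹ j) * |c * v j| := by
          rw [Finset.mul_sum]; congr 1; ext j
          rw [abs_mul, abs_of_nonneg hc]; ring
      _ ≤ Jlam lam (fun i => c * v i) :=
          sum_perm_le_jlam lam hlam (fun i => c * v i) _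

/-- Subadditivity-type bound: if `0 ≤ v ≤ u + z` pointwise with `u, z ≥ 0`. -/
lemma jlam_le_add {p : ℕ} (lam : Fin p → ℝ) (hlam : Antitone lam)
    (hlam_nonneg : ∀ i, 0 ≤ lam i) (v u z : Fin p → ℝ)
    (hv : ∀ i, 0 ≤ v i) (hu : ∀ i, 0 ≤ u i) (hz : ∀ i, 0 ≤ z i)
    (h : ∀ i, v i ≤ u i + z i) :
    Jlam lam v ≤ Jlam lam u + Jlam lam z := by
  rw [jlam_eq_perm lam v]
  calc ∑ j, lam ((sortPerm v)⁻¹ j) * |v j|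
      ≤ ∑ j, (lam ((sortPerm v)⁻¹ j) * |u j| + lam ((sortPerm v)⁻¹ j) * |z j|) := by
        apply Finset.sum_le_sum
        intro j _
        rw [← mul_add]
        apply mul_le_mul_of_nonneg_left _ (hlam_nonneg _)
        rw [abs_of_nonneg (hv j), abs_of_nonneg (hu j), abs_of_nonneg (hz j)]
        exact h j
    _ = (∑ j, lam ((sortPerm v)⁻¹ j) * |u j|)
          + ∑ j, lam ((sortPerm v)⁻¹ j) * |z j| := Finset.sum_add_distrib
    _ ≤ Jlam lam u + Jlam lam z :=
        add_le_add (sum_perm_le_jlam lam hlam u _) (sum_perm_le_jlam lam hlam z _)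

open Finset in
/-- Minkowski inequality for finite sums of squares. -/
lemma sqrt_sum_sq_add_le {n : ℕ} (f g : Fin n → ℝ) :
    Real.sqrt (∑ k, (f k + g k) ^ 2) ≤
      Real.sqrt (∑ k, f k ^ 2) + Real.sqrt (∑ k, g k ^ 2) := by
  set a := Real.sqrt (∑ k, f k ^ 2) with ha
  set c := Real.sqrt (∑ k, g k ^ 2) with hc
  have ha0 : 0 ≤ a := Real.sqrt_nonneg _
  have hc0 : 0 ≤ c := Real.sqrt_nonneg _
  have hCS : ∑ k, f k * g k ≤ a * c := by
    have h1 : (∑ k, f k * g k) ^ 2 ≤ (∑ k, f k ^ 2) * ∑ k, g k ^ 2 :=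
      Finset.sum_mul_sq_le_sq_mul_sq _ _ _
    calc ∑ k, f k * g k ≤ |∑ k, f k * g k| := le_abs_self _
      _ = Real.sqrt ((∑ k, f k * g k) ^ 2) := (Real.sqrt_sq_eq_abs _).symm
      _ ≤ Real.sqrt ((∑ k, f k ^ 2) * ∑ k, g k ^ 2) := Real.sqrt_le_sqrt h1
      _ = a * c := by
          rw [Real.sqrt_mul (Finset.sum_nonneg fun i _ => sq_nonneg _)]
  have key : ∑ k, (f k + g k) ^ 2 ≤ (a + c) ^ 2 := by
    have hfa : ∑ k, f k ^ 2 = a ^ 2 := by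
      rw [ha, Real.sq_sqrt (Finset.sum_nonneg fun i _ => sq_nonneg _)]
    have hgc : ∑ k, g k ^ 2 = c ^ 2 := by
      rw [hc, Real.sq_sqrt (Finset.sum_nonneg fun i _ => sq_nonneg _)]
    calc ∑ k, (f k + g k) ^ 2
        = ∑ k, f k ^ 2 + 2 * ∑ k, f k * g k + ∑ k, g k ^ 2 := by
          have hk : ∀ k : Fin n, (f k + g k) ^ 2
              = f k ^ 2 + 2 * (f k * g k) + g k ^ 2 := fun k => by ring
          simp_rw [hk]
          rw [Finset.sum_add_distrib, Finset.sum_add_distrib, ← Finset.mul_sum]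
      _ ≤ a ^ 2 + 2 * (a * c) + c ^ 2 := by
          rw [hfa, hgc]
          have := mul_le_mul_of_nonneg_left hCS (by norm_num : (0:ℝ) ≤ 2)
          linarith
      _ = (a + c) ^ 2 := by ring
  calc Real.sqrt (∑ k, (f k + g k) ^ 2) ≤ Real.sqrt ((a + c) ^ 2) :=
        Real.sqrt_le_sqrt key
    _ = a + c := by rw [Real.sqrt_sq (by linarith)]

open Finset in
lemma groupEffect_nonneg {n p m : ℕ} (X : Matrix (Fin n) (Fin p) ℝ)
    (grp : Fin p → Fin m) (b : Fin p → ℝ) (i : Fin m) :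
    0 ≤ groupEffect X grp b i := Real.sqrt_nonneg _

open Finset in
lemma groupEffect_smul {n p m : ℕ} (X : Matrix (Fin n) (Fin p) ℝ)
    (grp : Fin p → Fin m) (t : ℝ) (b : Fin p → ℝ) (i : Fin m) :
    groupEffect X grp (t • b) i = |t| * groupEffect X grp b i := by
  unfold groupEffect
  have : ∀ k, (∑ j ∈ univ.filter (fun j => grp j = i), X k j * (t • b) j)
      = t * ∑ j ∈ univ.filter (fun j => grp j = i), X k j * b j := by
    intro k
    rw [Finset.mul_sum]
    congr 1; ext j
    simp [Pi.smul_apply, smul_eq_mul]; ring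
  simp_rw [this, mul_pow, ← Finset.mul_sum, Real.sqrt_mul (sq_nonneg t),
    Real.sqrt_sq_eq_abs]

open Finset in
lemma groupEffect_add_le {n p m : ℕ} (X : Matrix (Fin n) (Fin p) ℝ)
    (grp : Fin p → Fin m) (a b : Fin p → ℝ) (i : Fin m) :
    groupEffect X grp (a + b) i ≤ groupEffect X grp a i + groupEffect X grp b i := by
  unfold groupEffect
  have hsplit : ∀ k, (∑ j ∈ univ.filter (fun j => grp j = i), X k j * (a + b) j)
      = (∑ j ∈ univ.filter (fun j => grp j = i), X k j * a j)
        + ∑ j ∈ univ.filter (fun j => grp j = i), X k j * b j := by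
    intro k
    rw [← Finset.sum_add_distrib]
    congr 1; ext j
    simp [Pi.add_apply]; ring
  simp_rw [hsplit]
  exact sqrt_sum_sq_add_le _ _

/-- The function `b ↦ J_λ(W ⟦b⟧_{X,I})` is a seminorm on `ℝ^p` for any nonincreasing
nonnegative `λ`, partition `I` of the coordinates, design matrix `X` and positive weights:
it is absolutely homogeneous and satisfies the triangle inequality. -/
theorem groupSortedL1_is_seminorm {n p m : ℕ} (X : Matrix (Fin n) (Fin p) ℝ)
    (grp : Fin p → Fin m) (hgrp : Function.Surjective grp)
    (lam : Fin m → ℝ)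
    (hlam_anti : ∀ i j : Fin m, i ≤ j → lam j ≤ lam i)
    (hlam_nonneg : ∀ i, 0 ≤ lam i)
    (w : Fin m → ℝ) (hw : ∀ i, 0 < w i) :
    (∀ (t : ℝ) (b : Fin p → ℝ),
        Jlam lam (fun i => w i * groupEffect X grp (t • b) i) =
          |t| * Jlam lam (fun i => w i * groupEffect X grp b i)) ∧
    (∀ a b : Fin p → ℝ,
        Jlam lam (fun i => w i * groupEffect X grp (a + b) i) ≤
          Jlam lam (fun i => w i * groupEffect X grp a i) +
            Jlam lam (fun i => w i * groupEffect X grp b i)) := by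
  have hanti : Antitone lam := fun i j h => hlam_anti i j h
  constructor
  · intro t b
    have : (fun i => w i * groupEffect X grp (t • b) i)
        = fun i => |t| * (w i * groupEffect X grp b i) := by
      ext i; rw [groupEffect_smul]; ring
    rw [this]
    exact jlam_smul lam hanti |t| (abs_nonneg t) _
  · intro a b
    apply jlam_le_add lam hanti hlam_nonneg
    · intro i
      exact mul_nonneg (hw i).le (groupEffect_nonneg X grp _ i)
    · intro i
      exact mul_nonneg (hw i).le (groupEffect_nonneg X grp _ i)
    · intro i
      exact mul_nonneg (hw i).le (groupEffect_nonneg X grp _ i)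
    · intro i
      rw [← mul_add]
      exact mul_le_mul_of_nonneg_left (groupEffect_add_le X grp a b i) (hw i).le
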